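/- Let (P₁, ≤₁) and (P₂, ≤₂) be finitely certifiable partially ordered sets. Then their product P₁ × P₂, with the componentwise partial order (p₁,p₂) ≤ (q₁,q₂) iff p₁ ≤₁ q₁ and p₂ ≤₂ q₂, is finitely certifiable. -/

import Mathlib

/-- A poset has maximums (least upper bounds of pairs, in the sense of cones) if for
any two elements `p, q` there is `m` with `Cone(p) ∩ Cone(q) = Cone(m)`. -/
def HasMaximums (P : Type*) [PartialOrder P] : Prop :=
  ∀ p q : P, ∃ m : P, Set.Ici p ∩ Set.Ici q = Set.Ici m

/-- A poset is Noetherian if every increasing sequence of upper sets stabilizes. -/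
def NoetherianPoset (P : Type*) [PartialOrder P] : Prop :=
  ∀ Q : ℕ → Set P, (∀ n, IsUpperSet (Q n)) → (∀ n, Q n ⊆ Q (n + 1)) →
    ∃ N : ℕ, ∀ i j : ℕ, N ≤ i → N ≤ j → Q i = Q j

/-- A poset is finitely certifiable if it has maximums and is Noetherian. -/
def FinitelyCertifiable (P : Type*) [PartialOrder P] : Prop :=
  HasMaximums P ∧ NoetherianPoset P

/-- A Noetherian poset is partially well ordered (wqo). -/
lemma noetherian_isPWO {P : Type*} [PartialOrder P] (h : NoetherianPoset P) :
    (Set.univ : Set P).IsPWO := by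
  intro f'
  set f : ℕ → P := fun n => (f' n : P) with hf
  by_contra hbad
  push_neg at hbad
  -- Q n = upward closure of {f 0, ..., f (n-1)}
  set Q : ℕ → Set P := fun n => ⋃ i ∈ Finset.range n, Set.Ici (f i) with hQ
  have hup : ∀ n, IsUpperSet (Q n) := by
    intro n x y hxy hx
    simp only [hQ, Set.mem_iUnion] at hx ⊢
    obtain ⟨i, hi, hfi⟩ := hx
    exact ⟨i, hi, le_trans hfi hxy⟩
  have hsub : ∀ n, Q n ⊆ Q (n + 1) := by
    intro n x hx
    simp only [hQ, Set.mem_iUnion] at hx ⊢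
    obtain ⟨i, hi, hfi⟩ := hx
    exact ⟨i, by simp at hi ⊢; omega, hfi⟩
  obtain ⟨N, hN⟩ := h Q hup hsub
  have hmem : f N ∈ Q (N + 1) := by
    simp only [hQ, Set.mem_iUnion]
    exact ⟨N, by simp, le_refl _⟩
  rw [hN (N + 1) N (by omega) (by omega)] at hmem
  simp only [hQ, Set.mem_iUnion] at hmem
  obtain ⟨i, hi, hfi⟩ := hmem
  simp only [Finset.mem_range] at hi
  exact hbad i N hi hfi

/-- A partially well ordered poset is Noetherian. -/
lemma isPWO_noetherian {P : Type*} [PartialOrder P] (h : (Set.univ : Set P).IsPWO) :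
    NoetherianPoset P := by
  intro Q hup hsub
  by_contra hbad
  push_neg at hbad
  have hmono : ∀ {i j : ℕ}, i ≤ j → Q i ⊆ Q j := by
    intro i j hij
    induction j with
    | zero => simp_all
    | succ j ih =>
      rcases Nat.lt_or_ge i (j + 1) with hlt | hge
      · exact (ih (by omega)).trans (hsub j)
      · have : i = j + 1 := by omega
        subst this; rfl
  -- For each N there is M ≥ N and x ∈ Q M \ Q N
  have key : ∀ N : ℕ, ∃ M : ℕ, N ≤ M ∧ ∃ x : P, x ∈ Q M ∧ x ∉ Q N := by
    intro N
    obtain ⟨i, j, hi, hj, hne⟩ := hbad N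
    rcases le_total i j with hij | hij
    · have hss : Q i ⊂ Q j := (hmono hij).ssubset_of_ne hne
      obtain ⟨x, hxj, hxi⟩ := Set.exists_of_ssubset hss
      exact ⟨j, hj, x, hxj, fun hx => hxi (hmono hi hx)⟩
    · have hss : Q j ⊂ Q i := (hmono hij).ssubset_of_ne (Ne.symm hne)
      obtain ⟨x, hxi, hxj⟩ := Set.exists_of_ssubset hss
      exact ⟨i, hi, x, hxi, fun hx => hxj (hmono hj hx)⟩
  choose F hF x hxF hxN using key
  -- build index sequence n k
  set n : ℕ → ℕ := fun k => Nat.rec 0 (fun _ m => F m) k with hn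
  have hnstep : ∀ k, n (k + 1) = F (n k) := fun k => rfl
  have hnmono : Monotone n := by
    apply monotone_nat_of_le_succ
    intro k
    rw [hnstep]
    exact hF (n k)
  -- the sequence k ↦ x (n k) has a good pair
  obtain ⟨k, l, hkl, hle⟩ := h (fun k => ⟨x (n k), Set.mem_univ _⟩)
  -- x (n k) ∈ Q (F (n k)) = Q (n (k+1)) ⊆ Q (n l)
  have h1 : x (n k) ∈ Q (n l) := hmono (by rw [← hnstep]; exact hnmono hkl) (hxF (n k))
  exact hxN (n l) (hup (n l) hle h1)

/-- The product of two finitely certifiable posets, with the componentwise partial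
order, is finitely certifiable. -/
theorem prod_finitelyCertifiable (P₁ P₂ : Type*) [PartialOrder P₁] [PartialOrder P₂]
    (h₁ : FinitelyCertifiable P₁) (h₂ : FinitelyCertifiable P₂) :
    FinitelyCertifiable (P₁ × P₂) := by
  obtain ⟨hm₁, hn₁⟩ := h₁
  obtain ⟨hm₂, hn₂⟩ := h₂
  constructor
  · rintro ⟨p₁, p₂⟩ ⟨q₁, q₂⟩
    obtain ⟨m₁, hm1⟩ := hm₁ p₁ q₁
    obtain ⟨m₂, hm2⟩ := hm₂ p₂ q₂
    refine ⟨(m₁, m₂), ?_⟩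
    ext ⟨a, b⟩
    have e1 := Set.ext_iff.mp hm1 a
    have e2 := Set.ext_iff.mp hm2 b
    simp only [Set.mem_inter_iff, Set.mem_Ici] at e1 e2
    simp only [Set.mem_inter_iff, Set.mem_Ici, Prod.mk_le_mk]
    tauto
  · apply isPWO_noetherian
    have := (noetherian_isPWO hn₁).prod (noetherian_isPWO hn₂)
    rwa [Set.univ_prod_univ] at this
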